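/- arXiv:2312.02760 — 7 statements merged into one kernel-verified Lean document; each statement's English description precedes it below -/
import Mathlib

section
/- The function Φ(x) = 2 sin(2x)/(2 - cos(2x)) satisfies Φ'' + Φ^3/sin^2 x = 0 on (0, π/2), with Φ(0) = 0 and the Dirichlet condition Φ(π/2) = 0. -/
open Real

lemma aux_den_ne (x : ℝ) : (2 - Real.cos (2 * x)) ≠ 0 := by
  nlinarith [Real.cos_le_one (2 * x)]

lemma aux_deriv1 (Φ : ℝ → ℝ)
    (hΦ : ∀ x, Φ x = 2 * Real.sin (2 * x) / (2 - Real.cos (2 * x))) (x : ℝ) :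
    HasDerivAt Φ ((8 * Real.cos (2 * x) - 4) / (2 - Real.cos (2 * x)) ^ 2) x := by
  have hnum : HasDerivAt (fun x : ℝ => 2 * Real.sin (2 * x)) (4 * Real.cos (2 * x)) x := by
    have h := ((Real.hasDerivAt_sin (2 * x)).comp x
      ((hasDerivAt_id x).const_mul 2)).const_mul 2
    exact h.congr_deriv (by ring)
  have hden : HasDerivAt (fun x : ℝ => 2 - Real.cos (2 * x)) (2 * Real.sin (2 * x)) x := by
    have h := (((Real.hasDerivAt_cos (2 * x)).comp x
      ((hasDerivAt_id x).const_mul 2)).const_sub 2)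
    exact h.congr_deriv (by ring)
  have h := hnum.div hden (aux_den_ne x)
  have hfun : Φ = fun x => 2 * Real.sin (2 * x) / (2 - Real.cos (2 * x)) := funext hΦ
  rw [hfun]
  refine h.congr_deriv (Eq.symm ?_)
  have hsc := Real.sin_sq_add_cos_sq (2 * x)
  congr 1
  linear_combination (4 : ℝ) * hsc

lemma aux_deriv_eq (Φ : ℝ → ℝ)
    (hΦ : ∀ x, Φ x = 2 * Real.sin (2 * x) / (2 - Real.cos (2 * x))) :
    deriv Φ = fun x => (8 * Real.cos (2 * x) - 4) / (2 - Real.cos (2 * x)) ^ 2 :=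
  funext fun x => (aux_deriv1 Φ hΦ x).deriv

lemma aux_deriv2 (x : ℝ) :
    HasDerivAt (fun x => (8 * Real.cos (2 * x) - 4) / (2 - Real.cos (2 * x)) ^ 2)
      ((-16 * Real.sin (2 * x) * (2 - Real.cos (2 * x)) ^ 2 -
        (8 * Real.cos (2 * x) - 4) * (2 * (2 - Real.cos (2 * x)) * (2 * Real.sin (2 * x)))) /
        ((2 - Real.cos (2 * x)) ^ 2) ^ 2) x := by
  have hnum : HasDerivAt (fun x : ℝ => 8 * Real.cos (2 * x) - 4) (-16 * Real.sin (2 * x)) x := by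
    have h := (((Real.hasDerivAt_cos (2 * x)).comp x
      ((hasDerivAt_id x).const_mul 2)).const_mul 8).sub_const 4
    exact h.congr_deriv (by ring)
  have hd : HasDerivAt (fun x : ℝ => 2 - Real.cos (2 * x)) (2 * Real.sin (2 * x)) x := by
    have h := (((Real.hasDerivAt_cos (2 * x)).comp x
      ((hasDerivAt_id x).const_mul 2)).const_sub 2)
    exact h.congr_deriv (by ring)
  have hden : HasDerivAt (fun x : ℝ => (2 - Real.cos (2 * x)) ^ 2)
      (2 * (2 - Real.cos (2 * x)) * (2 * Real.sin (2 * x))) x := by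
    have h := hd.pow 2
    exact h.congr_deriv (by ring)
  exact hnum.div hden (pow_ne_zero 2 (aux_den_ne x))

/-- `Φ(x) = 2 sin(2x)/(2 - cos(2x))` satisfies `Φ'' + Φ³/sin²x = 0` on
`(0, π/2)`, with `Φ(0) = 0` and the Dirichlet condition `Φ(π/2) = 0`. -/
theorem stmt_3 (Φ : ℝ → ℝ)
    (hΦ : ∀ x, Φ x = 2 * Real.sin (2 * x) / (2 - Real.cos (2 * x))) :
    (∀ x ∈ Set.Ioo 0 (π / 2),
      deriv (deriv Φ) x + (Φ x) ^ 3 / (Real.sin x) ^ 2 = 0) ∧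
    Φ 0 = 0 ∧ Φ (π / 2) = 0 := by
  refine ⟨?_, ?_, ?_⟩
  · intro x hx
    have hsin : Real.sin x ≠ 0 := by
      have := Real.sin_pos_of_pos_of_lt_pi hx.1 (by linarith [hx.2, Real.pi_pos])
      linarith
    rw [aux_deriv_eq Φ hΦ, (aux_deriv2 x).deriv, hΦ x]
    have hden := aux_den_ne x
    have hs2 : Real.sin (2 * x) = 2 * Real.sin x * Real.cos x := by
      rw [Real.sin_two_mul]
    have hc2 : Real.cos (2 * x) = 1 - 2 * Real.sin x ^ 2 := by
      rw [Real.cos_two_mul, Real.cos_sq']; ring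
    have hsc := Real.sin_sq_add_cos_sq x
    simp only [hs2, hc2]
    have hden2 : (2 - (1 - 2 * Real.sin x ^ 2)) ≠ 0 := by nlinarith [sq_nonneg (Real.sin x)]
    field_simp
    linear_combination (64 * Real.sin x ^ 3 * Real.cos x *
      (2 - (1 - 2 * Real.sin x ^ 2)) ^ 4 + ((-1024) * Real.sin x ^ 11 * Real.cos x + (-2048) * Real.sin x ^ 9 * Real.cos x + (-1536) * Real.sin x ^ 7 * Real.cos x + (-512) * Real.sin x ^ 5 * Real.cos x + (-64) * Real.sin x ^ 3 * Real.cos x + 64 * Real.sin x * Real.cos x)) * hsc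
  · simp [hΦ]
  · rw [hΦ]
    have : 2 * (π / 2) = π := by ring
    rw [this, Real.sin_pi]
    simp
end

section
/- The function Φ(x) = √2 · tan x satisfies the defocusing static equation Φ'' - Φ^3/sin^2 x = 0 on (0, π/2), with Φ(0) = 0. -/
open Real

/-- `Φ(x) = √2 · tan x` satisfies the defocusing static equation
`Φ'' - Φ³/sin²x = 0` on `(0, π/2)`, with `Φ(0) = 0`. -/
theorem stmt_4 (Φ : ℝ → ℝ) (hΦ : ∀ x, Φ x = Real.sqrt 2 * Real.tan x) :
    (∀ x ∈ Set.Ioo 0 (π / 2),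
      deriv (deriv Φ) x - (Φ x) ^ 3 / (Real.sin x) ^ 2 = 0) ∧
    Φ 0 = 0 := by
  have hfun : Φ = fun x => Real.sqrt 2 * Real.tan x := funext hΦ
  constructor
  · intro x hx
    obtain ⟨hx0, hxπ⟩ := hx
    have hcos : Real.cos x ≠ 0 := by
      have : 0 < Real.cos x := Real.cos_pos_of_mem_Ioo
        ⟨by linarith [Real.pi_pos], hxπ⟩
      linarith
    have hsin : Real.sin x ≠ 0 := by
      have : 0 < Real.sin x := Real.sin_pos_of_pos_of_lt_pi hx0
        (by linarith [Real.pi_pos])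
      linarith
    -- deriv Φ = √2 / cos² everywhere
    have hderiv : deriv Φ = fun y => Real.sqrt 2 * (1 / Real.cos y ^ 2) := by
      funext y
      by_cases hc : Real.cos y = 0
      · have hnd : ¬ DifferentiableAt ℝ Real.tan y := by
          intro h
          exact Real.continuousAt_tan.mp h.continuousAt hc
        have hnd' : ¬ DifferentiableAt ℝ Φ y := by
          intro h
          apply hnd
          have : DifferentiableAt ℝ (fun x => (Real.sqrt 2)⁻¹ * Φ x) y :=
            h.const_mul _
          simpa [hfun, ← mul_assoc, inv_mul_cancel₀
            (by positivity : Real.sqrt 2 ≠ 0)] using this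
        simp [deriv_zero_of_not_differentiableAt hnd', hc]
      · rw [hfun, deriv_const_mul _ (Real.differentiableAt_tan.mpr hc),
          Real.deriv_tan]
    rw [hderiv]
    -- second derivative
    have h2 : HasDerivAt (fun y => Real.sqrt 2 * (1 / Real.cos y ^ 2))
        (Real.sqrt 2 * (2 * Real.sin x / Real.cos x ^ 3)) x := by
      have hc : HasDerivAt (fun y => Real.cos y ^ 2)
          (2 * Real.cos x * (-Real.sin x)) x := by
        simpa using (Real.hasDerivAt_cos x).fun_pow 2
      have hinv : HasDerivAt (fun y => (Real.cos y ^ 2)⁻¹)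
          (-(2 * Real.cos x * (-Real.sin x)) / (Real.cos x ^ 2) ^ 2) x :=
        hc.inv (pow_ne_zero 2 hcos)
      have h3 : -(2 * Real.cos x * -Real.sin x) / ((Real.cos x ^ 2) ^ 2)
          = 2 * Real.sin x / Real.cos x ^ 3 := by
        rw [div_eq_div_iff (pow_ne_zero 2 (pow_ne_zero 2 hcos))
          (pow_ne_zero 3 hcos)]
        ring
      have := hinv.const_mul (Real.sqrt 2)
      rw [h3] at this
      simpa [one_div] using this
    rw [h2.deriv, hΦ, Real.tan_eq_sin_div_cos]
    have h2' : Real.sqrt 2 ^ 3 = 2 * Real.sqrt 2 := by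
      rw [pow_succ, Real.sq_sqrt (by norm_num : (2:ℝ) ≥ 0)]
    rw [mul_pow, h2']
    field_simp
    ring
  · simp [hΦ]
end

section
/- There is no nontrivial C^2 solution s : [0, π/2] → ℝ of the defocusing static equation s'' = s^3/sin^2 x with s(0) = 0 satisfying the Robin boundary condition s'(π/2) + b·s(π/2) = 0 for any b ≥ 0 (in particular for Dirichlet s(π/2) = 0 or Neumann s'(π/2) = 0): any such solution is identically zero. -/
open Real MeasureTheory

/-- No nontrivial solution of the defocusing static equation `s'' = s³/sin²x`
on `(0, π/2)` with `s(0) = 0` and Robin condition `s'(π/2) = -b s(π/2)`, `b ≥ 0`: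
any such solution vanishes identically on `[0, π/2]`. -/
theorem stmt_5 (s s' : ℝ → ℝ) (b : ℝ) (hb : 0 ≤ b)
    (hder : ∀ x ∈ Set.Icc 0 (π / 2), HasDerivAt s (s' x) x)
    (hder' : ∀ x ∈ Set.Ioo 0 (π / 2),
      HasDerivAt s' ((s x) ^ 3 / (Real.sin x) ^ 2) x)
    (hcont : ContinuousOn s' (Set.Icc 0 (π / 2)))
    (h0 : s 0 = 0)
    (hint : IntegrableOn (fun x => (s x) ^ 4 / (Real.sin x) ^ 2)
      (Set.Ioo 0 (π / 2)))
    (hRobin : s' (π / 2) = -b * s (π / 2)) :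
    ∀ x ∈ Set.Icc 0 (π / 2), s x = 0 := by
  have hpi : (0:ℝ) < π / 2 := by positivity
  have hsc : ContinuousOn s (Set.Icc 0 (π / 2)) := fun x hx =>
    (hder x hx).continuousAt.continuousWithinAt
  set g : ℝ → ℝ := fun x => s' x ^ 2 + s x ^ 4 / Real.sin x ^ 2 with hg
  have hint1 : IntervalIntegrable (fun x => s' x ^ 2) volume 0 (π / 2) := by
    apply ContinuousOn.intervalIntegrable
    rw [Set.uIcc_of_le hpi.le]
    exact hcont.pow 2
  have hint2 : IntervalIntegrable (fun x => s x ^ 4 / Real.sin x ^ 2) volume 0 (π / 2) := by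
    rw [intervalIntegrable_iff_integrableOn_Ioc_of_le hpi.le,
      integrableOn_Ioc_iff_integrableOn_Ioo]
    exact hint
  have hintg : IntervalIntegrable g volume 0 (π / 2) := hint1.add hint2
  have hderF : ∀ x ∈ Set.Ioo 0 (π / 2), HasDerivAt (fun x => s x * s' x) (g x) x := by
    intro x hx
    have h1 : HasDerivAt (fun x => s x * s' x)
        (s' x * s' x + s x * (s x ^ 3 / Real.sin x ^ 2)) x :=
      (hder x (Set.Ioo_subset_Icc_self hx)).fun_mul (hder' x hx)
    convert h1 using 1
    show s' x ^ 2 + s x ^ 4 / Real.sin x ^ 2 = _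
    ring
  have hFc : ContinuousOn (fun x => s x * s' x) (Set.Icc 0 (π / 2)) := hsc.mul hcont
  have hFTC : ∫ y in (0:ℝ)..(π / 2), g y = s (π / 2) * s' (π / 2) - s 0 * s' 0 :=
    intervalIntegral.integral_eq_sub_of_hasDeriv_right_of_le hpi.le hFc
      (fun x hx => (hderF x hx).hasDerivWithinAt) hintg
  have hle : ∫ y in (0:ℝ)..(π / 2), g y ≤ 0 := by
    rw [hFTC, h0, hRobin]
    nlinarith [sq_nonneg (s (π / 2))]
  have hsplit : ∫ y in (0:ℝ)..(π / 2), g y =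
      (∫ y in (0:ℝ)..(π / 2), s' y ^ 2) + ∫ y in (0:ℝ)..(π / 2), s y ^ 4 / Real.sin y ^ 2 :=
    intervalIntegral.integral_add hint1 hint2
  have h1nn : 0 ≤ ∫ y in (0:ℝ)..(π / 2), s' y ^ 2 :=
    intervalIntegral.integral_nonneg hpi.le fun u _ => sq_nonneg _
  have h2nn : 0 ≤ ∫ y in (0:ℝ)..(π / 2), s y ^ 4 / Real.sin y ^ 2 :=
    intervalIntegral.integral_nonneg hpi.le fun u _ =>
      div_nonneg (by positivity) (sq_nonneg _)
  have hI1 : ∫ y in (0:ℝ)..(π / 2), s' y ^ 2 = 0 := by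
    rw [hsplit] at hle; linarith
  have hae : ∀ᵐ x ∂(volume.restrict (Set.Ioc 0 (π / 2))), s' x ^ 2 = 0 := by
    have hInt : Integrable (fun x => s' x ^ 2) (volume.restrict (Set.Ioc 0 (π / 2))) := hint1.1
    have := (MeasureTheory.integral_eq_zero_iff_of_nonneg
      (f := fun x => s' x ^ 2) (fun x => sq_nonneg (s' x)) hInt).mp
      (by rw [← intervalIntegral.integral_of_le hpi.le]; exact hI1)
    filter_upwards [this] with x hx using hx
  have hzero' : ∀ x ∈ Set.Ioo 0 (π / 2), s' x = 0 := by
    by_contra h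
    push_neg at h
    obtain ⟨x₀, hx₀, hne⟩ := h
    set U := Set.Ioo 0 (π / 2) ∩ s' ⁻¹' {(0:ℝ)}ᶜ with hU
    have hUopen : IsOpen U :=
      (hcont.mono Set.Ioo_subset_Icc_self).isOpen_inter_preimage isOpen_Ioo
        isOpen_compl_singleton
    have hUne : U.Nonempty := ⟨x₀, hx₀, hne⟩
    have hpos : 0 < volume U := hUopen.measure_pos volume hUne
    have hnull : volume {x | ¬(x ∈ Set.Ioc 0 (π / 2) → s' x ^ 2 = 0)} = 0 := by
      have := (ae_restrict_iff' measurableSet_Ioc).mp hae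
      exact this
    have hsub : U ⊆ {x | ¬(x ∈ Set.Ioc 0 (π / 2) → s' x ^ 2 = 0)} := by
      rintro x ⟨hx1, hx2⟩
      intro hcontra
      have hmem : x ∈ Set.Ioc 0 (π / 2) := Set.Ioo_subset_Ioc_self hx1
      have := hcontra hmem
      exact hx2 (by simpa using pow_eq_zero_iff (n := 2) (by norm_num) |>.mp this)
    exact absurd (measure_mono_null hsub hnull) hpos.ne'
  have hs'0 : s' 0 = 0 := by
    have h1 : Filter.Tendsto s' (nhdsWithin 0 (Set.Ioi 0)) (nhds (s' 0)) := by
      have hc := hcont 0 (Set.left_mem_Icc.mpr hpi.le)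
      refine hc.tendsto.mono_left (nhdsWithin_le_iff.mpr ?_)
      exact Filter.mem_of_superset (Ioo_mem_nhdsGT_of_mem ⟨le_refl 0, hpi⟩)
        Set.Ioo_subset_Icc_self
    have h2 : Filter.Tendsto s' (nhdsWithin 0 (Set.Ioi 0)) (nhds 0) := by
      refine Filter.Tendsto.congr' ?_ tendsto_const_nhds
      filter_upwards [Ioo_mem_nhdsGT_of_mem ⟨le_refl 0, hpi⟩] with x hx
      exact (hzero' x hx).symm
    exact tendsto_nhds_unique h1 h2
  have hconst : ∀ x ∈ Set.Icc 0 (π / 2), s x = s 0 := by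
    apply constant_of_has_deriv_right_zero hsc
    intro x hx
    have hd := hder x (Set.Ico_subset_Icc_self hx)
    have hz : s' x = 0 := by
      rcases eq_or_lt_of_le hx.1 with h | h
      · rw [← h]; exact hs'0
      · exact hzero' x ⟨h, hx.2⟩
    rw [hz] at hd
    exact hd.hasDerivWithinAt
  intro x hx
  rw [hconst x hx, h0]
end

section
/- For b < -2/π, there exists a unique k > 0 satisfying k = -b·tanh(kπ/2); consequently the linearized operator around zero with Robin parameter b admits an exponentially growing mode ψ(x) = sinh(kx), which satisfies ψ'' = k²ψ, ψ(0) = 0, and ψ'(π/2) + b ψ(π/2) = 0. For b > -2/π no such k > 0 exists. -/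
open Real
open Set


lemma tanh_eq (x : ℝ) : Real.tanh x = Real.sinh x / Real.cosh x :=
  Real.tanh_eq_sinh_div_cosh x

lemma continuous_tanh' : Continuous Real.tanh := by
  rw [show Real.tanh = fun x => Real.sinh x / Real.cosh x from funext tanh_eq]
  exact Real.continuous_sinh.div Real.continuous_cosh fun x => (Real.cosh_pos x).ne'

lemma sinh_lt_mul_cosh {x : ℝ} (hx : 0 < x) : Real.sinh x < x * Real.cosh x := by
  have h : StrictMonoOn (fun t => t * Real.cosh t - Real.sinh t) (Ici 0) := by
    refine strictMonoOn_of_deriv_pos (convex_Ici 0)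
      (((continuous_id.mul Real.continuous_cosh).sub Real.continuous_sinh).continuousOn) ?_
    intro t ht
    rw [interior_Ici, mem_Ioi] at ht
    have hD : HasDerivAt (fun t => t * Real.cosh t - Real.sinh t) (t * Real.sinh t) t := by
      have := ((hasDerivAt_id t).mul (Real.hasDerivAt_cosh t)).sub (Real.hasDerivAt_sinh t)
      exact this.congr_deriv (by simp only [id_eq]; ring)
    rw [hD.deriv]
    exact mul_pos ht (Real.sinh_pos_iff.2 ht)
  have := h (self_mem_Ici) (le_of_lt hx : (0:ℝ) ≤ x) hx
  simpa using this

lemma tanh_lt_self {x : ℝ} (hx : 0 < x) : Real.tanh x < x := by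
  rw [_root_.tanh_eq, div_lt_iff₀ (Real.cosh_pos x)]
  exact sinh_lt_mul_cosh hx

lemma tanh_pos {x : ℝ} (hx : 0 < x) : 0 < Real.tanh x := by
  rw [_root_.tanh_eq]
  exact div_pos (Real.sinh_pos_iff.2 hx) (Real.cosh_pos x)

lemma tanh_lt_one (x : ℝ) : Real.tanh x < 1 := by
  rw [_root_.tanh_eq, div_lt_one (Real.cosh_pos x)]
  have : Real.cosh x - Real.sinh x = Real.exp (-x) := Real.cosh_sub_sinh x
  nlinarith [Real.exp_pos (-x)]

lemma tanh_div_strictAnti : StrictAntiOn (fun t => Real.tanh t / t) (Ioi 0) := by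
  have he : EqOn (fun t => Real.tanh t / t) (fun t => Real.sinh t / (t * Real.cosh t)) (Ioi 0) := by
    intro t _; simp [_root_.tanh_eq, div_div, mul_comm]
  refine StrictAntiOn.congr ?_ he.symm
  refine strictAntiOn_of_deriv_neg (convex_Ioi 0) ?_ ?_
  · exact (Real.continuous_sinh.continuousOn.div
      ((continuous_id.mul Real.continuous_cosh).continuousOn)
      (fun t ht => (mul_pos (mem_Ioi.1 ht) (Real.cosh_pos t)).ne'))
  · intro t ht
    rw [interior_Ioi, mem_Ioi] at ht
    have hne : t * Real.cosh t ≠ 0 := (mul_pos ht (Real.cosh_pos t)).ne'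
    have hD : HasDerivAt (fun t => Real.sinh t / (t * Real.cosh t))
        ((Real.cosh t * (t * Real.cosh t) - Real.sinh t * (1 * Real.cosh t + t * Real.sinh t))
          / (t * Real.cosh t) ^ 2) t :=
      (Real.hasDerivAt_sinh t).div ((hasDerivAt_id t).mul (Real.hasDerivAt_cosh t)) hne
    rw [hD.deriv]
    apply div_neg_of_neg_of_pos
    · have h1 : Real.cosh t ^ 2 - Real.sinh t ^ 2 = 1 := Real.cosh_sq_sub_sinh_sq t
      have h2 : 2 * t < Real.sinh (2 * t) := Real.self_lt_sinh_iff.2 (by linarith)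
      have h3 : Real.sinh (2 * t) = 2 * Real.sinh t * Real.cosh t := Real.sinh_two_mul t
      nlinarith
    · positivity

/-- For `b < -2/π` there is a unique `k > 0` with `k = -b tanh(kπ/2)`; the
corresponding growing mode `ψ(x) = sinh(kx)` satisfies `ψ'' = k²ψ`, `ψ(0) = 0`
and the Robin condition `ψ'(π/2) + b ψ(π/2) = 0`.  For `b > -2/π` no such
`k > 0` exists. -/
theorem stmt_8 (b : ℝ) :
    (b < -2 / π → ∃! k : ℝ, 0 < k ∧ k = -b * Real.tanh (k * (π / 2))) ∧
    (∀ k : ℝ, 0 < k → k = -b * Real.tanh (k * (π / 2)) →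
      (∀ x : ℝ, deriv (deriv (fun y => Real.sinh (k * y))) x =
        k ^ 2 * Real.sinh (k * x)) ∧
      Real.sinh (k * 0) = 0 ∧
      deriv (fun y => Real.sinh (k * y)) (π / 2)
        + b * Real.sinh (k * (π / 2)) = 0) ∧
    (-2 / π < b → ¬ ∃ k : ℝ, 0 < k ∧ k = -b * Real.tanh (k * (π / 2))) := by
  have hπ : (0:ℝ) < π := Real.pi_pos
  refine ⟨?_, ?_, ?_⟩
  · -- existence and uniqueness for b < -2/π
    intro hb
    have hb0 : b < 0 := by
      have : -2/π < 0 := div_neg_of_neg_of_pos (by norm_num) hπ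
      linarith
    have hbπ : b * π < -2 := by
      have := (lt_div_iff₀ hπ).mp hb
      linarith
    have hC : (1:ℝ) < -b * (π/2) := by nlinarith
    -- choose δ with cosh δ < -b * (π/2) near 0
    have hcosh0 : Filter.Tendsto Real.cosh (nhds 0) (nhds 1) := by
      simpa using Real.continuous_cosh.tendsto 0
    have hev : ∀ᶠ y in nhds (0:ℝ), Real.cosh y < -b * (π/2) :=
      hcosh0.eventually_lt_const hC
    obtain ⟨δ, hδpos, hball⟩ := Metric.eventually_nhds_iff.mp hev
    set ε : ℝ := min (δ/π) (-b/2) with hεdef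
    have hεpos : 0 < ε := lt_min (by positivity) (by linarith)
    have hεb : ε < -b := lt_of_le_of_lt (min_le_right _ _) (by linarith)
    have hX : 0 < ε * (π/2) := by positivity
    have hXδ : ε * (π/2) < δ := by
      have h1 : ε ≤ δ/π := min_le_left _ _
      have : ε * (π/2) ≤ (δ/π) * (π/2) := by nlinarith
      have h2 : (δ/π) * (π/2) = δ/2 := by field_simp
      linarith [hδpos, h2 ▸ this]
    have hcoshX : Real.cosh (ε * (π/2)) < -b * (π/2) := by
      apply hball
      rw [Real.dist_eq, sub_zero, abs_of_pos hX]
      exact hXδ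
    -- G ε > 0
    have htanhcosh : Real.tanh (ε*(π/2)) * Real.cosh (ε*(π/2)) = Real.sinh (ε*(π/2)) := by
      rw [_root_.tanh_eq]; field_simp
    have hs : ε*(π/2) ≤ Real.sinh (ε*(π/2)) := Real.self_le_sinh_iff.mpr hX.le
    have htp : 0 < Real.tanh (ε*(π/2)) := tanh_pos hX
    have hGε : ε < -b * Real.tanh (ε*(π/2)) := by nlinarith
    have hGb : -b * Real.tanh (-b*(π/2)) < -b := by
      nlinarith [_root_.tanh_lt_one (-b*(π/2)), _root_.tanh_pos (show (0:ℝ) < -b*(π/2) by nlinarith)]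
    -- IVT
    set g : ℝ → ℝ := fun k => -b * Real.tanh (k*(π/2)) - k with hgdef
    have hgc : Continuous g :=
      (continuous_const.mul (continuous_tanh'.comp (continuous_id.mul continuous_const))).sub
        continuous_id
    have hsub : Set.Ioo (g (-b)) (g ε) ⊆ g '' Set.Ioo ε (-b) :=
      intermediate_value_Ioo' hεb.le hgc.continuousOn
    have h0mem : (0:ℝ) ∈ Set.Ioo (g (-b)) (g ε) := by
      constructor
      · simp only [hgdef]; linarith
      · simp only [hgdef]; linarith
    obtain ⟨k, hkmem, hgk⟩ := hsub h0mem
    have hkpos : 0 < k := lt_trans hεpos hkmem.1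
    have hkeq : k = -b * Real.tanh (k*(π/2)) := by
      simp only [hgdef] at hgk; linarith
    have hbne : b ≠ 0 := hb0.ne
    have key : ∀ c : ℝ, 0 < c → c = -b * Real.tanh (c*(π/2)) →
        Real.tanh (c*(π/2)) / (c*(π/2)) = 2 / (-(b*π)) := by
      intro c hc hceq
      have ht : Real.tanh (c*(π/2)) = -(c/b) := by
        field_simp at hceq ⊢; linarith
      rw [ht]
      field_simp
    refine ⟨k, ⟨hkpos, hkeq⟩, ?_⟩
    rintro k' ⟨hk'pos, hk'eq⟩
    have h1 := key k hkpos hkeq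
    have h2 := key k' hk'pos hk'eq
    have hmem1 : k'*(π/2) ∈ Set.Ioi (0:ℝ) := by simp; positivity
    have hmem2 : k*(π/2) ∈ Set.Ioi (0:ℝ) := by simp; positivity
    have := tanh_div_strictAnti.injOn hmem1 hmem2 (by rw [h1, h2])
    exact mul_right_cancel₀ (show (π/2:ℝ) ≠ 0 from (by positivity : (0:ℝ) < π/2).ne') this
  · -- the mode
    intro k hk heq
    have hD : ∀ x : ℝ, HasDerivAt (fun y => Real.sinh (k * y)) (Real.cosh (k*x) * k) x := by
      intro x
      have h1 : HasDerivAt (fun y : ℝ => k * y) k x := by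
        simpa using (hasDerivAt_id x).const_mul k
      exact (Real.hasDerivAt_sinh (k*x)).comp x h1
    have hderiv : deriv (fun y => Real.sinh (k * y)) = fun x => Real.cosh (k*x) * k :=
      funext fun x => (hD x).deriv
    refine ⟨?_, by simp, ?_⟩
    · intro x
      rw [hderiv]
      have h1 : HasDerivAt (fun y : ℝ => k * y) k x := by
        simpa using (hasDerivAt_id x).const_mul k
      have h2 : HasDerivAt (fun x => Real.cosh (k*x) * k) (Real.sinh (k*x) * k * k) x :=
        ((Real.hasDerivAt_cosh (k*x)).comp x h1).mul_const k
      rw [h2.deriv]; ring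
    · rw [hderiv]
      have hcne : Real.cosh (k*(π/2)) ≠ 0 := (Real.cosh_pos _).ne'
      rw [_root_.tanh_eq] at heq
      field_simp at heq ⊢
      linarith
  · -- nonexistence for b > -2/π
    rintro hb ⟨k, hkpos, hkeq⟩
    have hX : 0 < k*(π/2) := by positivity
    have h1 := _root_.tanh_pos hX
    have h2 := _root_.tanh_lt_self hX
    rcases le_or_gt 0 b with hb0 | hb0
    · nlinarith
    · have hb2 : -b < 2/π := by
        rw [neg_div] at hb; linarith
      have h3 : -b * Real.tanh (k*(π/2)) < -b * (k*(π/2)) := by nlinarith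
      have h4 : -b * (k*(π/2)) < (2/π) * (k*(π/2)) := by
        apply mul_lt_mul_of_pos_right hb2 hX
      have h5 : (2/π) * (k*(π/2)) = k := by field_simp
      linarith
end

section
/- The function χ(x) = cos⁴x · ₂F₁(2 - σ/2, 2 + σ/2; 7/2; cos²x) satisfies the linearized equation -σ²χ = (1/tan²x)(tan²x · χ')' - 4χ/cos²x on (0, π/2), for the perturbation around the constant solution φ = √2 of the defocusing equation; when σ = 4 + 2j (j ∈ ℕ) the hypergeometric series terminates and χ is regular with χ(0) = 0 enforceable, giving eigenvalues σ² = (4 + 2j)². -/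
open Real

/-- The Gauss hypergeometric function `₂F₁(a, b; c; x)` defined by its series. -/
noncomputable def hyp2F1 (a b c x : ℝ) : ℝ :=
  ∑' n : ℕ, ((ascPochhammer ℝ n).eval a * (ascPochhammer ℝ n).eval b /
    (ascPochhammer ℝ n).eval c) * x ^ n / (n.factorial : ℝ)

noncomputable def tc (σ : ℝ) (n : ℕ) : ℝ :=
  (ascPochhammer ℝ n).eval (2 - σ/2) * (ascPochhammer ℝ n).eval (2 + σ/2) /
    (ascPochhammer ℝ n).eval (7/2 : ℝ) / (n.factorial : ℝ)

lemma poch_pos (n : ℕ) : 0 < (ascPochhammer ℝ n).eval (7/2 : ℝ) := by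
  induction n with
  | zero => simp
  | succ n ih =>
    rw [ascPochhammer_succ_eval]
    have : (0:ℝ) ≤ n := n.cast_nonneg
    nlinarith

lemma tc_rec (σ : ℝ) (n : ℕ) :
    tc σ (n+1) * (((n:ℝ)+1) * ((n:ℝ) + 7/2)) =
    tc σ n * (((2 - σ/2) + n) * ((2 + σ/2) + n)) := by
  have h7 := (poch_pos n).ne'
  have hf : ((n.factorial : ℝ)) ≠ 0 := Nat.cast_ne_zero.2 n.factorial_ne_zero
  unfold tc
  rw [ascPochhammer_succ_eval, ascPochhammer_succ_eval, ascPochhammer_succ_eval,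
    Nat.factorial_succ]
  push_cast
  field_simp
  ring

lemma tc_step (σ : ℝ) (n : ℕ) (hn : σ^2 ≤ n) (hn1 : 1 ≤ n) :
    |tc σ (n+1)| ≤ |tc σ n| := by
  have h := tc_rec σ n
  have hn' : (σ:ℝ)^2 ≤ (n:ℝ) := by exact_mod_cast hn
  have hn1' : (1:ℝ) ≤ (n:ℝ) := by exact_mod_cast hn1
  have hpos : (0:ℝ) < ((n:ℝ)+1) * ((n:ℝ) + 7/2) := by nlinarith
  have habs : |tc σ (n+1)| * (((n:ℝ)+1) * ((n:ℝ) + 7/2)) =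
      |tc σ n| * |((2 - σ/2) + n) * ((2 + σ/2) + n)| := by
    rw [← abs_of_pos hpos, ← abs_mul, h, abs_mul]
  have hb : |((2 - σ/2) + n) * ((2 + σ/2) + n)| ≤ ((n:ℝ)+1) * ((n:ℝ) + 7/2) := by
    rw [abs_le]
    constructor <;> nlinarith [sq_nonneg σ, sq_nonneg ((n:ℝ)+2)]
  have := habs.le.trans (by
    have : |tc σ n| * |((2 - σ/2) + n) * ((2 + σ/2) + n)| ≤
        |tc σ n| * (((n:ℝ)+1) * ((n:ℝ) + 7/2)) :=
      mul_le_mul_of_nonneg_left hb (abs_nonneg _)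
    exact this)
  exact le_of_mul_le_mul_right this hpos

lemma tc_bound (σ : ℝ) : ∃ C : ℝ, 0 ≤ C ∧ ∀ n, |tc σ n| ≤ C := by
  set N : ℕ := ⌈σ^2⌉₊ + 1 with hN
  refine ⟨∑ k ∈ Finset.range (N+1), |tc σ k|,
    Finset.sum_nonneg fun k _ => abs_nonneg _, ?_⟩
  have hstep : ∀ n, N ≤ n → |tc σ (n+1)| ≤ |tc σ n| := by
    intro n hn
    refine tc_step σ n ?_ ?_
    · have h1 : ⌈σ^2⌉₊ ≤ n := by omega
      calc σ^2 ≤ (⌈σ^2⌉₊ : ℝ) := Nat.le_ceil _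
        _ ≤ n := by exact_mod_cast h1
    · omega
  have hmem : ∀ k, k ≤ N → |tc σ k| ≤ ∑ k ∈ Finset.range (N+1), |tc σ k| := by
    intro k hk
    exact Finset.single_le_sum (f := fun i => |tc σ i|) (fun i _ => abs_nonneg _)
      (Finset.mem_range.2 (by omega))
  intro n
  rcases le_or_gt n N with h | h
  · exact hmem n h
  · have : ∀ m, |tc σ (N + m)| ≤ |tc σ N| := by
      intro m
      induction m with
      | zero => simp
      | succ m ih => exact le_trans (hstep (N+m) (by omega)) ih
    have h2 := this (n - N)
    rw [Nat.add_sub_cancel' h.le] at h2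
    exact h2.trans (hmem N le_rfl)

/-- majorant summability -/
lemma summable_major (C : ℝ) {r : ℝ} (hr0 : 0 ≤ r) (hr : r < 1) :
    Summable (fun n : ℕ => C * (((n:ℝ)+2) * ((n:ℝ)+1)) * r^n) := by
  have hnorm : ‖r‖ < 1 := by rwa [Real.norm_eq_abs, abs_of_nonneg hr0]
  have h2 := summable_pow_mul_geometric_of_norm_lt_one (R := ℝ) 2 hnorm
  have h1 := summable_pow_mul_geometric_of_norm_lt_one (R := ℝ) 1 hnorm
  have h0 := summable_pow_mul_geometric_of_norm_lt_one (R := ℝ) 0 hnorm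
  have : Summable (fun n : ℕ => ((n:ℝ)^2 * r^n + 3 * ((n:ℝ)^1 * r^n)) + 2 * ((n:ℝ)^0 * r^n)) :=
    (h2.add (h1.mul_left 3)).add (h0.mul_left 2)
  have := this.mul_left C
  refine this.congr fun n => ?_
  ring

noncomputable def G (σ z : ℝ) : ℝ := ∑' n : ℕ, tc σ n * z^(n+2)
noncomputable def G1 (σ z : ℝ) : ℝ := ∑' n : ℕ, tc σ n * ((n:ℝ)+2) * z^(n+1)
noncomputable def G2 (σ z : ℝ) : ℝ := ∑' n : ℕ, tc σ n * (((n:ℝ)+2) * ((n:ℝ)+1)) * z^n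

lemma summable_G2 (σ : ℝ) {z : ℝ} (hz : |z| < 1) :
    Summable (fun n : ℕ => tc σ n * (((n:ℝ)+2) * ((n:ℝ)+1)) * z^n) := by
  obtain ⟨C, hC0, hC⟩ := tc_bound σ
  refine Summable.of_norm_bounded (summable_major C (abs_nonneg z) hz) fun n => ?_
  rw [Real.norm_eq_abs, abs_mul, abs_mul, abs_pow]
  have h1 : (0:ℝ) ≤ ((n:ℝ)+2) * ((n:ℝ)+1) := by positivity
  rw [abs_of_nonneg h1]
  gcongr
  exact hC n

lemma summable_G1 (σ : ℝ) {z : ℝ} (hz : |z| < 1) :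
    Summable (fun n : ℕ => tc σ n * ((n:ℝ)+2) * z^(n+1)) := by
  obtain ⟨C, hC0, hC⟩ := tc_bound σ
  refine Summable.of_norm_bounded (summable_major C (abs_nonneg z) hz) fun n => ?_
  rw [Real.norm_eq_abs, abs_mul, abs_mul, abs_pow]
  have h2 : |z|^(n+1) ≤ |z|^n := pow_le_pow_of_le_one (abs_nonneg z) hz.le (by omega)
  have habs : |(n:ℝ)+2| = (n:ℝ)+2 := abs_of_nonneg (by positivity)
  rw [habs]
  have hb : (n:ℝ)+2 ≤ ((n:ℝ)+2) * ((n:ℝ)+1) := by nlinarith [Nat.cast_nonneg (α := ℝ) n]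
  exact mul_le_mul (mul_le_mul (hC n) hb (by positivity) hC0) h2 (by positivity) (by positivity)

lemma summable_G0 (σ : ℝ) {z : ℝ} (hz : |z| < 1) :
    Summable (fun n : ℕ => tc σ n * z^(n+2)) := by
  obtain ⟨C, hC0, hC⟩ := tc_bound σ
  refine Summable.of_norm_bounded (summable_major C (abs_nonneg z) hz) fun n => ?_
  rw [Real.norm_eq_abs, abs_mul, abs_pow]
  have h2 : |z|^(n+2) ≤ |z|^n := pow_le_pow_of_le_one (abs_nonneg z) hz.le (by omega)
  have hb : (1:ℝ) ≤ ((n:ℝ)+2) * ((n:ℝ)+1) := by nlinarith [Nat.cast_nonneg (α := ℝ) n]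
  calc |tc σ n| * |z|^(n+2) ≤ C * |z|^n := mul_le_mul (hC n) h2 (by positivity) hC0
    _ ≤ C * (((n:ℝ)+2) * ((n:ℝ)+1)) * |z|^n := by nlinarith [pow_nonneg (abs_nonneg z) n, mul_le_mul_of_nonneg_right (le_mul_of_one_le_right hC0 hb) (pow_nonneg (abs_nonneg z) n)]

lemma hasDerivAt_G (σ : ℝ) {z : ℝ} (hz : |z| < 1) : HasDerivAt (G σ) (G1 σ z) z := by
  obtain ⟨C, hC0, hC⟩ := tc_bound σ
  set r : ℝ := (|z| + 1) / 2 with hr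
  have hr0 : 0 ≤ r := by positivity
  have hr1 : r < 1 := by rw [hr]; linarith
  have hzr : |z| < r := by rw [hr]; linarith [abs_nonneg z]
  have key := hasDerivAt_tsum_of_isPreconnected
    (u := fun n : ℕ => C * (((n:ℝ)+2) * ((n:ℝ)+1)) * r^n)
    (g := fun (n : ℕ) (y : ℝ) => tc σ n * y^(n+2))
    (g' := fun (n : ℕ) (y : ℝ) => tc σ n * ((n:ℝ)+2) * y^(n+1))
    (t := Metric.ball (0:ℝ) r) (y₀ := 0) (y := z)
    (summable_major C hr0 hr1) Metric.isOpen_ball ((convex_ball (0:ℝ) r).isPreconnected)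
    ?_ ?_ (by simpa using hr0.lt_of_ne (by intro h; rw [← h] at hzr; exact absurd hzr (not_lt.2 (abs_nonneg z)))) ?_ (by simpa [Real.dist_eq] using hzr)
  · exact key
  · intro n y _
    have h := (hasDerivAt_pow (n+2) y).const_mul (tc σ n)
    exact h.congr_deriv (by push_cast; ring)
  · intro n y hy
    have hyr : |y| ≤ r := by
      rw [Metric.mem_ball, Real.dist_eq, sub_zero] at hy
      exact hy.le
    rw [Real.norm_eq_abs, abs_mul, abs_mul, abs_pow]
    have habs : |(n:ℝ)+2| = (n:ℝ)+2 := abs_of_nonneg (by positivity)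
    rw [habs]
    have hb : (n:ℝ)+2 ≤ ((n:ℝ)+2) * ((n:ℝ)+1) := by nlinarith [Nat.cast_nonneg (α := ℝ) n]
    have hpow : |y|^(n+1) ≤ r^n := by
      calc |y|^(n+1) ≤ r^(n+1) := pow_le_pow_left₀ (abs_nonneg y) hyr (n+1)
        _ ≤ r^n := pow_le_pow_of_le_one hr0 hr1.le (by omega)
    exact mul_le_mul (mul_le_mul (hC n) hb (by positivity) hC0) hpow (by positivity) (by positivity)
  · apply summable_zero.congr
    intro n
    simp [zero_pow]

lemma hasDerivAt_G1 (σ : ℝ) {z : ℝ} (hz : |z| < 1) : HasDerivAt (G1 σ) (G2 σ z) z := by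
  obtain ⟨C, hC0, hC⟩ := tc_bound σ
  set r : ℝ := (|z| + 1) / 2 with hr
  have hr0 : 0 ≤ r := by positivity
  have hr1 : r < 1 := by rw [hr]; linarith
  have hzr : |z| < r := by rw [hr]; linarith [abs_nonneg z]
  have hrpos : 0 < r := lt_of_le_of_lt (abs_nonneg z) hzr
  have key := hasDerivAt_tsum_of_isPreconnected
    (u := fun n : ℕ => C * (((n:ℝ)+2) * ((n:ℝ)+1)) * r^n)
    (g := fun (n : ℕ) (y : ℝ) => tc σ n * ((n:ℝ)+2) * y^(n+1))
    (g' := fun (n : ℕ) (y : ℝ) => tc σ n * (((n:ℝ)+2) * ((n:ℝ)+1)) * y^n)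
    (t := Metric.ball (0:ℝ) r) (y₀ := 0) (y := z)
    (summable_major C hr0 hr1) Metric.isOpen_ball ((convex_ball (0:ℝ) r).isPreconnected)
    ?_ ?_ (by simpa using hrpos) ?_ (by simpa [Real.dist_eq] using hzr)
  · exact key
  · intro n y _
    have h := (hasDerivAt_pow (n+1) y).const_mul (tc σ n * ((n:ℝ)+2))
    exact h.congr_deriv (by push_cast; ring)
  · intro n y hy
    have hyr : |y| ≤ r := by
      rw [Metric.mem_ball, Real.dist_eq, sub_zero] at hy
      exact hy.le
    rw [Real.norm_eq_abs, abs_mul, abs_mul, abs_pow]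
    have habs : |((n:ℝ)+2) * ((n:ℝ)+1)| = ((n:ℝ)+2) * ((n:ℝ)+1) := abs_of_nonneg (by positivity)
    rw [habs]
    have hpow : |y|^n ≤ r^n := pow_le_pow_left₀ (abs_nonneg y) hyr n
    exact mul_le_mul (mul_le_mul (hC n) le_rfl (by positivity) hC0) hpow (by positivity)
      (by positivity)
  · apply summable_zero.congr
    intro n
    simp [zero_pow]

lemma key_identity (σ : ℝ) {z : ℝ} (hz : |z| < 1) :
    4*z^2*(1-z) * G2 σ z - z*(4*z+2) * G1 σ z + (σ^2*z - 4) * G σ z = 0 := by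
  obtain ⟨C, hC0, hC⟩ := tc_bound σ
  set A : ℕ → ℝ := fun n => tc σ n * (2*(n:ℝ)*(2*(n:ℝ)+5)) * z^(n+2) with hA
  have h0 : HasSum (fun n : ℕ => tc σ n * z^(n+2)) (G σ z) := (summable_G0 σ hz).hasSum
  have h1 : HasSum (fun n : ℕ => tc σ n * ((n:ℝ)+2) * z^(n+1)) (G1 σ z) :=
    (summable_G1 σ hz).hasSum
  have h2 : HasSum (fun n : ℕ => tc σ n * (((n:ℝ)+2) * ((n:ℝ)+1)) * z^n) (G2 σ z) :=
    (summable_G2 σ hz).hasSum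
  have hcomb : HasSum (fun n : ℕ =>
      4*z^2*(1-z) * (tc σ n * (((n:ℝ)+2) * ((n:ℝ)+1)) * z^n)
      - z*(4*z+2) * (tc σ n * ((n:ℝ)+2) * z^(n+1))
      + (σ^2*z - 4) * (tc σ n * z^(n+2)))
      (4*z^2*(1-z) * G2 σ z - z*(4*z+2) * G1 σ z + (σ^2*z - 4) * G σ z) :=
    ((h2.mul_left _).sub (h1.mul_left _)).add (h0.mul_left _)
  have htel : ∀ n : ℕ,
      4*z^2*(1-z) * (tc σ n * (((n:ℝ)+2) * ((n:ℝ)+1)) * z^n)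
      - z*(4*z+2) * (tc σ n * ((n:ℝ)+2) * z^(n+1))
      + (σ^2*z - 4) * (tc σ n * z^(n+2)) = A n - A (n+1) := by
    intro n
    have hrec := tc_rec σ n
    simp only [hA]
    push_cast
    have e1 : z^(n+1) = z^n * z := by ring
    have e2 : z^(n+2) = z^n * z^2 := by ring
    have e3 : z^(n+1+2) = z^n * z^3 := by ring
    rw [e1, e2, e3]
    linear_combination (4 * z^n * z^3) * hrec
  have hsum2 : HasSum (fun n : ℕ => A n - A (n+1))
      (4*z^2*(1-z) * G2 σ z - z*(4*z+2) * G1 σ z + (σ^2*z - 4) * G σ z) :=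
    hcomb.congr_fun fun n => (htel n).symm
  have hpartial := hsum2.tendsto_sum_nat
  have hps : ∀ N : ℕ, ∑ i ∈ Finset.range N, (A i - A (i+1)) = A 0 - A N := by
    intro N
    exact Finset.sum_range_sub' A N
  rw [Filter.tendsto_congr hps] at hpartial
  have hA0 : A 0 = 0 := by simp [hA]
  have hAlim : Filter.Tendsto A Filter.atTop (nhds 0) := by
    have hmaj : Filter.Tendsto (fun n : ℕ => 4 * (C * (((n:ℝ)+2) * ((n:ℝ)+1)) * |z|^n))
        Filter.atTop (nhds 0) := by
      have := (summable_major C (abs_nonneg z) hz).tendsto_atTop_zero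
      simpa using (this.const_mul 4)
    apply squeeze_zero_norm _ hmaj
    intro n
    rw [Real.norm_eq_abs, hA]
    simp only
    rw [abs_mul, abs_mul, abs_pow]
    have hc : |2*(n:ℝ)*(2*(n:ℝ)+5)| = 2*(n:ℝ)*(2*(n:ℝ)+5) := abs_of_nonneg (by positivity)
    rw [hc]
    have hb : 2*(n:ℝ)*(2*(n:ℝ)+5) ≤ 4 * (((n:ℝ)+2) * ((n:ℝ)+1)) := by
      nlinarith [Nat.cast_nonneg (α := ℝ) n]
    have hp : |z|^(n+2) ≤ |z|^n := pow_le_pow_of_le_one (abs_nonneg z) hz.le (by omega)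
    calc |tc σ n| * (2*(n:ℝ)*(2*(n:ℝ)+5)) * |z|^(n+2)
        ≤ C * (4 * (((n:ℝ)+2) * ((n:ℝ)+1))) * |z|^n :=
          mul_le_mul (mul_le_mul (hC n) hb (by positivity) hC0) hp (by positivity) (by positivity)
      _ = 4 * (C * (((n:ℝ)+2) * ((n:ℝ)+1)) * |z|^n) := by ring
  have hlim2 : Filter.Tendsto (fun N : ℕ => A 0 - A N) Filter.atTop (nhds 0) := by
    have := (tendsto_const_nhds (x := A 0) (f := Filter.atTop (α := ℕ))).sub hAlim
    simpa [hA0] using this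
  exact tendsto_nhds_unique hpartial hlim2

lemma chi_eq (σ w : ℝ) :
    w^2 * hyp2F1 (2 - σ/2) (2 + σ/2) (7/2) w = G σ w := by
  unfold hyp2F1 G
  rw [← tsum_mul_left]
  congr 1
  funext n
  unfold tc
  ring

lemma poch_neg (j : ℕ) : ∀ n : ℕ, j < n → (ascPochhammer ℝ n).eval (-(j:ℝ)) = 0 := by
  have base : (ascPochhammer ℝ (j+1)).eval (-(j:ℝ)) = 0 := by
    rw [ascPochhammer_succ_eval]
    simp
  intro n hn
  obtain ⟨m, rfl⟩ : ∃ m, n = (j+1) + m := ⟨n - (j+1), by omega⟩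
  induction m with
  | zero => simpa using base
  | succ m ih =>
    rw [show j+1+(m+1) = (j+1+m)+1 by omega, ascPochhammer_succ_eval, ih (by omega)]
    ring

theorem part1 (σ : ℝ) :
    ∀ x ∈ Set.Ioo 0 (π / 2),
      -σ ^ 2 * G σ (Real.cos x ^ 2) =
        (1 / (Real.tan x) ^ 2) *
          deriv (fun y => (Real.tan y) ^ 2 * deriv (fun y => G σ (Real.cos y ^ 2)) y) x -
        4 * G σ (Real.cos x ^ 2) / (Real.cos x) ^ 2 := by
  intro x hx
  obtain ⟨hx0, hx2⟩ := hx
  have hπ : (0:ℝ) < π := Real.pi_pos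
  have hc : 0 < Real.cos x := Real.cos_pos_of_mem_Ioo ⟨by linarith, hx2⟩
  have hs : 0 < Real.sin x := Real.sin_pos_of_pos_of_lt_pi hx0 (by linarith)
  -- |cos y ^ 2| < 1 for y in the interval
  have hzlt : ∀ y ∈ Set.Ioo 0 (π/2), |Real.cos y ^ 2| < 1 := by
    intro y hy
    have hsy : 0 < Real.sin y := Real.sin_pos_of_pos_of_lt_pi hy.1 (by linarith [hy.2])
    have hpy := Real.sin_sq_add_cos_sq y
    rw [abs_of_nonneg (sq_nonneg _)]
    nlinarith
  -- derivative of inner function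
  have hinner : ∀ y : ℝ, HasDerivAt (fun y => Real.cos y ^ 2)
      (2 * Real.cos y * (-Real.sin y)) y := by
    intro y
    have h := (Real.hasDerivAt_cos y).fun_pow 2
    exact h.congr_deriv (by simp)
  have hderiv : ∀ y ∈ Set.Ioo 0 (π/2),
      HasDerivAt (fun y => G σ (Real.cos y ^ 2))
        (G1 σ (Real.cos y ^ 2) * (2 * Real.cos y * (-Real.sin y))) y := by
    intro y hy
    exact (hasDerivAt_G σ (hzlt y hy)).comp y (hinner y)
  -- the function under the outer derivative agrees near x with an explicit one
  have hmem : Set.Ioo (0:ℝ) (π/2) ∈ nhds x := isOpen_Ioo.mem_nhds ⟨hx0, hx2⟩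
  have hEq : (fun y => (Real.tan y)^2 * deriv (fun y => G σ (Real.cos y ^ 2)) y)
      =ᶠ[nhds x] (fun y => (-2 * Real.sin y ^ 3 / Real.cos y) * G1 σ (Real.cos y ^ 2)) := by
    filter_upwards [hmem] with y hy
    have hcy : Real.cos y ≠ 0 :=
      (Real.cos_pos_of_mem_Ioo ⟨by linarith [hy.1], hy.2⟩).ne'
    rw [(hderiv y hy).deriv, Real.tan_eq_sin_div_cos]
    field_simp
  -- derivative of the explicit function
  have hq : HasDerivAt (fun y => -2 * Real.sin y ^ 3 / Real.cos y)
      (((-2 * (3 * Real.sin x ^ 2 * Real.cos x)) * Real.cos x -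
        (-2 * Real.sin x ^ 3) * (-Real.sin x)) / Real.cos x ^ 2) x := by
    have hnum : HasDerivAt (fun y => -2 * Real.sin y ^ 3)
        (-2 * (3 * Real.sin x ^ 2 * Real.cos x)) x := by
      have h := ((Real.hasDerivAt_sin x).fun_pow 3).const_mul (-2 : ℝ)
      exact h.congr_deriv (by simp)
    exact hnum.div (Real.hasDerivAt_cos x) hc.ne'
  have hG1c : HasDerivAt (fun y => G1 σ (Real.cos y ^ 2))
      (G2 σ (Real.cos x ^ 2) * (2 * Real.cos x * (-Real.sin x))) x := by
    exact (hasDerivAt_G1 σ (hzlt x ⟨hx0, hx2⟩)).comp x (hinner x)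
  have hK := hq.mul hG1c
  have hD : deriv (fun y => (Real.tan y)^2 * deriv (fun y => G σ (Real.cos y ^ 2)) y) x =
      ((-2 * (3 * Real.sin x ^ 2 * Real.cos x)) * Real.cos x -
        (-2 * Real.sin x ^ 3) * (-Real.sin x)) / Real.cos x ^ 2 * G1 σ (Real.cos x ^ 2) +
      (-2 * Real.sin x ^ 3 / Real.cos x) *
        (G2 σ (Real.cos x ^ 2) * (2 * Real.cos x * (-Real.sin x))) := by
    rw [hEq.deriv_eq]; exact hK.deriv
  rw [hD]
  -- final algebra
  have key := key_identity σ (hzlt x ⟨hx0, hx2⟩)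
  have hpy := Real.sin_sq_add_cos_sq x
  rw [Real.tan_eq_sin_div_cos]
  set s := Real.sin x
  set c := Real.cos x
  set g := G σ (c^2)
  set g1 := G1 σ (c^2)
  set g2 := G2 σ (c^2)
  field_simp
  linear_combination (-1) * key + (2*c^2*g1 - 4*c^4*g2) * hpy

/-- `χ(x) = cos⁴x · ₂F₁(2 - σ/2, 2 + σ/2; 7/2; cos²x)` solves the linearized
equation `-σ²χ = (1/tan²x)(tan²x χ')' - 4χ/cos²x` on `(0, π/2)` around the
constant solution `φ = √2`; for `σ = 4 + 2j` the hypergeometric series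
terminates (the Pochhammer symbol of `2 - σ/2` vanishes from order `j+1` on)
and the eigenvalues are `σ² = (4 + 2j)²`. -/
theorem stmt_11 (σ : ℝ) (χ : ℝ → ℝ)
    (hχ : ∀ x, χ x = (Real.cos x) ^ 4 *
      hyp2F1 (2 - σ / 2) (2 + σ / 2) (7 / 2) ((Real.cos x) ^ 2)) :
    (∀ x ∈ Set.Ioo 0 (π / 2),
      -σ ^ 2 * χ x =
        (1 / (Real.tan x) ^ 2) *
          deriv (fun y => (Real.tan y) ^ 2 * deriv χ y) x -
        4 * χ x / (Real.cos x) ^ 2) ∧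
    (∀ j : ℕ, σ = 4 + 2 * (j : ℝ) →
      (∀ n : ℕ, j < n → (ascPochhammer ℝ n).eval (2 - σ / 2) = 0) ∧
      σ ^ 2 = (4 + 2 * (j : ℝ)) ^ 2) := by
  have hfun : χ = fun x => G σ (Real.cos x ^ 2) := by
    funext x
    rw [hχ x, ← chi_eq σ (Real.cos x ^ 2)]
    ring
  subst hfun
  constructor
  · exact part1 σ
  · intro j hj
    refine ⟨fun n hn => ?_, by rw [hj]⟩
    have h2 : 2 - σ / 2 = -(j:ℝ) := by rw [hj]; ring
    rw [h2]
    exact poch_neg j n hn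
end

section
/- For the singular static equation at the horizon: if s is a C^1 solution of (μ s')' - y(1 + y_H²)s - λ y_H³ s³ = 0 near y = y_H with μ(y) = y_H³ + y² y_H³ - y³(1 + y_H²) and s(y_H) = c, then necessarily s'(y_H) = -c·(1 + y_H²(1 + λc²)) / (y_H(3 + y_H²)). -/
open Real Filter Set Topology

/-- Regularity condition at the horizon: if `s` is a `C¹` solution of
`(μ s')' - y(1 + y_H²)s - λ y_H³ s³ = 0` near `y = y_H`, where
`μ(y) = y_H³(1 + y²) - y³(1 + y_H²)`, and `s(y_H) = c`, then
`s'(y_H) = -c (1 + y_H²(1 + λ c²)) / (y_H (3 + y_H²))`. -/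
theorem stmt_13 (yH c l ε : ℝ) (hyH : 0 < yH) (hl : l = -1 ∨ l = 1)
    (hε : 0 < ε) (μ : ℝ → ℝ)
    (hμ : ∀ y, μ y = yH ^ 3 + y ^ 2 * yH ^ 3 - y ^ 3 * (1 + yH ^ 2))
    (s s' : ℝ → ℝ)
    (hder : ∀ y ∈ Set.Ioc (yH - ε) yH, HasDerivAt s (s' y) y)
    (hcont : ContinuousOn s' (Set.Ioc (yH - ε) yH))
    (hODE : ∀ y ∈ Set.Ioo (yH - ε) yH,
      HasDerivAt (fun z => μ z * s' z)
        (y * (1 + yH ^ 2) * s y + l * yH ^ 3 * (s y) ^ 3) y)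
    (hc : s yH = c) :
    s' yH = -(c * (1 + yH ^ 2 * (1 + l * c ^ 2))) / (yH * (3 + yH ^ 2)) := by
  have hyHmem : yH ∈ Set.Ioc (yH - ε) yH := ⟨by linarith, le_refl _⟩
  have hμyH : μ yH = 0 := by rw [hμ]; ring
  -- μ has derivative -yH^2*(3+yH^2) at yH
  have hμeq : μ = fun y => yH ^ 3 + y ^ 2 * yH ^ 3 - y ^ 3 * (1 + yH ^ 2) := funext hμ
  have hμder : HasDerivAt μ (-(yH ^ 2 * (3 + yH ^ 2))) yH := by
    rw [hμeq]
    have : HasDerivAt (fun y : ℝ => yH ^ 3 + y ^ 2 * yH ^ 3 - y ^ 3 * (1 + yH ^ 2))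
        (0 + 2 * yH ^ 1 * yH ^ 3 - 3 * yH ^ 2 * (1 + yH ^ 2)) yH := by
      exact (((hasDerivAt_const yH (yH^3)).add
        (((hasDerivAt_pow 2 yH)).mul_const (yH^3))).sub
        (((hasDerivAt_pow 3 yH)).mul_const (1 + yH^2)))
    convert this using 1; ring
  set g : ℝ → ℝ := fun z => μ z * s' z with hg
  set F : ℝ := yH * (1 + yH ^ 2) * c + l * yH ^ 3 * c ^ 3 with hF
  -- nhdsWithin facts
  have hIoo : Set.Ioo (yH - ε) yH ∈ 𝓝[<] yH := by
    apply Ioo_mem_nhdsLT_of_mem; constructor <;> [linarith; rfl]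
  -- s' tendsto s' yH within Iio
  have hs'tend : Tendsto s' (𝓝[<] yH) (𝓝 (s' yH)) := by
    have h1 : Tendsto s' (𝓝[Set.Ioc (yH - ε) yH] yH) (𝓝 (s' yH)) :=
      hcont.continuousWithinAt hyHmem
    refine h1.mono_left ?_
    rw [← nhdsWithin_Ioo_eq_nhdsLT (show yH - ε < yH by linarith)]
    exact nhdsWithin_mono _ Set.Ioo_subset_Ioc_self
  -- s continuous at yH
  have hscont : ContinuousAt s yH := (hder yH hyHmem).continuousAt
  -- g has derivative F within Iic yH at yH
  have hgder : HasDerivWithinAt g F (Set.Iic yH) yH := by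
    apply hasDerivWithinAt_Iic_of_tendsto_deriv
      (s := Set.Ioo (yH - ε) yH)
    · intro y hy
      exact ((hODE y hy).differentiableAt).differentiableWithinAt
    · apply ContinuousWithinAt.mul
      · exact (Continuous.continuousWithinAt (by rw [hμeq]; continuity))
      · exact (hcont.continuousWithinAt hyHmem).mono Set.Ioo_subset_Ioc_self
    · exact hIoo
    · have hcongr : ∀ᶠ y in 𝓝[<] yH,
          deriv g y = y * (1 + yH ^ 2) * s y + l * yH ^ 3 * (s y) ^ 3 := by
        filter_upwards [hIoo] with y hy
        exact (hODE y hy).deriv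
      have htend : Tendsto (fun y => y * (1 + yH ^ 2) * s y + l * yH ^ 3 * (s y) ^ 3)
          (𝓝[<] yH) (𝓝 F) := by
        have : Tendsto (fun y => y * (1 + yH ^ 2) * s y + l * yH ^ 3 * (s y) ^ 3)
            (𝓝 yH) (𝓝 (yH * (1 + yH ^ 2) * s yH + l * yH ^ 3 * (s yH) ^ 3)) := by
          exact ((((continuousAt_id).mul continuousAt_const).mul hscont).add
            (continuousAt_const.mul (hscont.pow 3)))
        rw [hc] at this
        exact this.mono_left nhdsWithin_le_nhds
      exact Tendsto.congr' (hcongr.mono fun y h => h.symm) htend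
  -- slope characterization: slope g yH → F along 𝓝[<] yH
  have hslope1 : Tendsto (slope g yH) (𝓝[<] yH) (𝓝 F) := by
    have := hasDerivWithinAt_iff_tendsto_slope.1 hgder
    have heq : Set.Iic yH \ {yH} = Set.Iio yH := by
      ext x; simp [Set.mem_diff, lt_iff_le_and_ne]
    rwa [heq] at this
  -- slope g yH y = slope μ yH y * s' y
  have hslope2 : Tendsto (slope g yH) (𝓝[<] yH) (𝓝 (-(yH ^ 2 * (3 + yH ^ 2)) * s' yH)) := by
    have hμslope : Tendsto (slope μ yH) (𝓝[<] yH) (𝓝 (-(yH ^ 2 * (3 + yH ^ 2)))) :=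
      ((hasDerivAt_iff_tendsto_slope.1 hμder).mono_left
        (nhdsWithin_mono _ fun x hx => ne_of_lt hx))
    have : Tendsto (fun y => slope μ yH y * s' y) (𝓝[<] yH)
        (𝓝 (-(yH ^ 2 * (3 + yH ^ 2)) * s' yH)) := hμslope.mul hs'tend
    refine this.congr fun y => ?_
    simp only [slope_def_field, hg]
    rw [hμyH]
    field_simp
    ring
  -- combine
  have hne : (𝓝[<] yH).NeBot := nhdsLT_neBot yH
  have key : -(yH ^ 2 * (3 + yH ^ 2)) * s' yH = F := tendsto_nhds_unique hslope2 hslope1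
  have h1 : yH * (3 + yH ^ 2) ≠ 0 := by positivity
  rw [hF] at key
  field_simp
  nlinarith [key]
end

section
/- Nonexistence of defocusing static solutions on SAdS with b ≥ 0: if s ∈ C^2([0, y_H]) satisfies (μ s')' - y(1 + y_H²)s - y_H³ s³ = 0 on (0, y_H) with μ(y) = y_H³(1 + y²) - y³(1 + y_H²), and the Robin condition s'(0) = b·s(0) with b ≥ 0 (so that -s(0)s'(0)·y_H³ ≤ 0), then s ≡ 0. -/
open Real

/-- Nonexistence of defocusing static solutions on SAdS with `b ≥ 0`: any
solution of `(μ s')' - y(1 + y_H²)s - y_H³ s³ = 0` on `(0, y_H)` with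
`μ(y) = y_H³(1 + y²) - y³(1 + y_H²)` and Robin condition `s'(0) = b s(0)`,
`b ≥ 0`, vanishes identically on `[0, y_H]`. -/
theorem stmt_15 (yH b : ℝ) (hyH : 0 < yH) (hb : 0 ≤ b) (μ : ℝ → ℝ)
    (hμ : ∀ y, μ y = yH ^ 3 + y ^ 2 * yH ^ 3 - y ^ 3 * (1 + yH ^ 2))
    (s s' : ℝ → ℝ)
    (hder : ∀ y ∈ Set.Icc 0 yH, HasDerivAt s (s' y) y)
    (hcont : ContinuousOn s' (Set.Icc 0 yH))
    (hODE : ∀ y ∈ Set.Ioo 0 yH,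
      HasDerivAt (fun z => μ z * s' z)
        (y * (1 + yH ^ 2) * s y + yH ^ 3 * (s y) ^ 3) y)
    (hRobin : s' 0 = b * s 0) :
    ∀ y ∈ Set.Icc 0 yH, s y = 0 := by
  set F : ℝ → ℝ := fun y => μ y * s' y * s y with hFdef
  have hμc : Continuous μ := by
    have : μ = fun y => yH ^ 3 + y ^ 2 * yH ^ 3 - y ^ 3 * (1 + yH ^ 2) := funext hμ
    rw [this]; continuity
  have hscont : ContinuousOn s (Set.Icc 0 yH) := fun y hy =>
    (hder y hy).continuousAt.continuousWithinAt
  have hFc : ContinuousOn F (Set.Icc 0 yH) :=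
    (hμc.continuousOn.mul hcont).mul hscont
  have hμpos : ∀ y ∈ Set.Ioo 0 yH, 0 < μ y := by
    intro y hy
    rw [hμ]
    have hp1 : y ^ 3 < yH ^ 3 := pow_lt_pow_left₀ hy.2 hy.1.le (by norm_num)
    have hp2 : 0 < y ^ 2 * yH ^ 2 * (yH - y) :=
      mul_pos (mul_pos (pow_pos hy.1 2) (pow_pos hyH 2)) (sub_pos.mpr hy.2)
    nlinarith [hp1, hp2]
  have hF' : ∀ y ∈ Set.Ioo 0 yH, HasDerivAt F
      (y * (1 + yH ^ 2) * (s y) ^ 2 + yH ^ 3 * (s y) ^ 4 + μ y * (s' y) ^ 2) y := by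
    intro y hy
    have h1 : HasDerivAt (fun z => μ z * s' z * s z) ((y * (1 + yH ^ 2) * s y + yH ^ 3 * s y ^ 3) * s y + μ y * s' y * s' y) y := (hODE y hy).mul (hder y (Set.Ioo_subset_Icc_self hy))
    convert h1 using 1
    ring
  have hmono : MonotoneOn F (Set.Icc 0 yH) := by
    apply monotoneOn_of_deriv_nonneg (convex_Icc 0 yH) hFc
    · rw [interior_Icc]
      intro y hy
      exact (hF' y hy).differentiableAt.differentiableWithinAt
    · rw [interior_Icc]
      intro y hy
      rw [(hF' y hy).deriv]
      have h1 : 0 ≤ y * (1 + yH ^ 2) * (s y) ^ 2 := mul_nonneg (mul_nonneg hy.1.le (by positivity)) (sq_nonneg _)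
      have h2 : 0 ≤ yH ^ 3 * (s y) ^ 4 := by positivity
      have h3 : 0 ≤ μ y * (s' y) ^ 2 :=
        mul_nonneg (hμpos y hy).le (sq_nonneg _)
      linarith
  have hF0 : 0 ≤ F 0 := by
    have : F 0 = yH ^ 3 * b * (s 0) ^ 2 := by
      simp only [hFdef, hμ, hRobin]; ring
    rw [this]
    positivity
  have hFH : F yH = 0 := by
    have hμH : μ yH = 0 := by rw [hμ]; ring
    simp [hFdef, hμH]
  have hFzero : ∀ y ∈ Set.Icc 0 yH, F y = 0 := by
    intro y hy
    have h1 : F 0 ≤ F y := hmono (Set.left_mem_Icc.mpr hyH.le) hy hy.1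
    have h2 : F y ≤ F yH := hmono hy (Set.right_mem_Icc.mpr hyH.le) hy.2
    linarith
  have hs0 : ∀ y ∈ Set.Ioo 0 yH, s y = 0 := by
    intro y hy
    have hD := hF' y hy
    have hEq : F =ᶠ[nhds y] fun _ => 0 := by
      filter_upwards [Ioo_mem_nhds hy.1 hy.2] with z hz
      exact hFzero z (Set.Ioo_subset_Icc_self hz)
    have h0 : HasDerivAt F 0 y :=
      (hasDerivAt_const y (0 : ℝ)).congr_of_eventuallyEq hEq
    have huniq := hD.unique h0
    have h1 : 0 ≤ y * (1 + yH ^ 2) * (s y) ^ 2 := mul_nonneg (mul_nonneg hy.1.le (by positivity)) (sq_nonneg _)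
    have h3 : 0 ≤ μ y * (s' y) ^ 2 := mul_nonneg (hμpos y hy).le (sq_nonneg _)
    have h4 : (s y) ^ 4 = 0 := by nlinarith [pow_pos hyH 3]
    exact pow_eq_zero_iff (by norm_num) |>.mp h4
  intro y hy
  have hcl : y ∈ closure (Set.Ioo 0 yH) := by
    rw [closure_Ioo hyH.ne]; exact hy
  have hne : (nhdsWithin y (Set.Ioo 0 yH)).NeBot :=
    mem_closure_iff_nhdsWithin_neBot.mp hcl
  have ht : Filter.Tendsto s (nhdsWithin y (Set.Ioo 0 yH)) (nhds (s y)) :=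
    (hscont y hy).mono_left (nhdsWithin_mono y Set.Ioo_subset_Icc_self)
  have ht0 : Filter.Tendsto s (nhdsWithin y (Set.Ioo 0 yH)) (nhds 0) := by
    apply Filter.Tendsto.congr' _ tendsto_const_nhds
    filter_upwards [self_mem_nhdsWithin] with z hz
    exact (hs0 z hz).symm
  exact tendsto_nhds_unique ht ht0
end
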